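/- arXiv:1506.07633 — 3 statements merged into one kernel-verified Lean document; each statement's English description precedes it below -/
import Mathlib

section
/- Let A_1, ..., A_k be Hermitian operators on a finite-dimensional Hilbert space that are all nondecreasing functions of one fixed Hermitian operator A (i.e., A_i = f_i(A) with each f_i : ℝ → ℝ nondecreasing). If B_1, ..., B_k are Hermitian operators with A_i majorizing B_i for each i (the ordered eigenvalue sequence of A_i majorizes that of B_i), then A_1 + ... + A_k majorizes B_1 + ... + B_k. -/
open Matrix

/-- The sum of the `q` largest values of the finite family `μ` (sorted decreasingly). -/
noncomputable def psum {n : ℕ} (μ : Fin n → ℝ) (q : ℕ) : ℝ :=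
  ∑ j ∈ Finset.univ.filter (fun j : Fin n => (j : ℕ) < q),
    μ (Tuple.sort (fun i => -μ i) j)

lemma sum_filter_lt_eq {n : ℕ} (q : ℕ) (g : Fin n → ℝ) :
    ∑ j ∈ Finset.univ.filter (fun j : Fin n => (j : ℕ) < q), g j
      = ∑ m : Fin (min q n), g ⟨(m : ℕ), lt_of_lt_of_le m.isLt (min_le_right q n)⟩ := by
  refine Finset.sum_bij' (i := fun j hj => (⟨(j : ℕ), ?_⟩ : Fin (min q n)))
    (j := fun m _ => (⟨(m : ℕ), lt_of_lt_of_le m.isLt (min_le_right q n)⟩ : Fin n))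
    ?_ ?_ ?_ ?_ ?_
  · simp only [Finset.mem_filter, Finset.mem_univ, true_and] at hj
    exact lt_min hj j.isLt
  · intro a ha; exact Finset.mem_univ _
  · intro m _
    simp only [Finset.mem_filter, Finset.mem_univ, true_and]
    exact lt_of_lt_of_le m.isLt (min_le_left q n)
  · intro a ha; rfl
  · intro a ha; rfl
  · intro a ha; rfl



lemma card_filter_lt (n q : ℕ) :
    (Finset.univ.filter (fun j : Fin n => (j : ℕ) < q)).card = min q n := by
  rw [show (Finset.univ.filter (fun j : Fin n => (j : ℕ) < q))
      = Finset.attachFin (Finset.range (min q n)) (fun m hm => by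
          have := Finset.mem_range.1 hm; omega) from ?_]
  · rw [Finset.card_attachFin, Finset.card_range]
  · ext j
    simp only [Finset.mem_filter, Finset.mem_univ, true_and, Finset.mem_attachFin,
      Finset.mem_range]
    have := j.isLt
    omega

lemma psum_eq_sum_of_antitone {n : ℕ} (μ : Fin n → ℝ) (σ : Equiv.Perm (Fin n))
    (h : Antitone (fun j => μ (σ j))) (q : ℕ) :
    psum μ q = ∑ j ∈ Finset.univ.filter (fun j : Fin n => (j : ℕ) < q), μ (σ j) := by
  have hmono : Monotone ((fun i => -μ i) ∘ σ) := by
    intro a b hab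
    simpa using h hab
  have heq := (Tuple.comp_sort_eq_comp_iff_monotone (f := fun i => -μ i) (σ := σ)).2 hmono
  refine (Finset.sum_congr rfl fun j _ => ?_).symm
  have := congrFun heq j
  simp only [Function.comp_apply, neg_inj] at this
  rw [this]

lemma antitone_comp_sort {n : ℕ} (μ : Fin n → ℝ) :
    Antitone (fun j => μ (Tuple.sort (fun i => -μ i) j)) := by
  intro a b hab
  have := Tuple.monotone_sort (fun i => -μ i) hab
  simpa using this

lemma sum_mul_le_sum_filter {n : ℕ} (μ s : Fin n → ℝ) (q : ℕ) (hμ : Antitone μ)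
    (h0 : ∀ j, 0 ≤ s j) (h1 : ∀ j, s j ≤ 1) (hs : ∑ j, s j = (min q n : ℕ)) :
    ∑ j, μ j * s j ≤ ∑ j ∈ Finset.univ.filter (fun j : Fin n => (j : ℕ) < q), μ j := by
  by_cases hqn : n ≤ q
  · have hF : Finset.univ.filter (fun j : Fin n => (j : ℕ) < q) = Finset.univ := by
      ext j; simp only [Finset.mem_filter, Finset.mem_univ, true_and, iff_true]
      exact lt_of_lt_of_le j.isLt hqn
    have hs1 : ∀ j, s j = 1 := by
      have hz : ∑ j : Fin n, (1 - s j) = 0 := by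
        rw [Finset.sum_sub_distrib, hs]
        simp [min_eq_right hqn]
      have := (Finset.sum_eq_zero_iff_of_nonneg (fun j _ => by linarith [h1 j])).1 hz
      intro j; have := this j (Finset.mem_univ j); linarith
    rw [hF]
    exact le_of_eq (Finset.sum_congr rfl fun j _ => by rw [hs1 j, mul_one])
  · push_neg at hqn
    have hq : min q n = q := min_eq_left (le_of_lt hqn)
    set F := Finset.univ.filter (fun j : Fin n => (j : ℕ) < q) with hFdef
    have hcard : F.card = q := by rw [hFdef, card_filter_lt, hq]
    set c := μ ⟨q, hqn⟩ with hc
    have key : ∀ j : Fin n, μ j * s j ≤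
        (if (j : ℕ) < q then μ j + c * (s j - 1) else c * s j) := by
      intro j
      by_cases hj : (j : ℕ) < q
      · rw [if_pos hj]
        have hcj : c ≤ μ j := hμ (show j ≤ ⟨q, hqn⟩ by rw [Fin.le_def]; exact le_of_lt hj)
        have hprod : (μ j - c) * (s j - 1) ≤ 0 :=
          mul_nonpos_of_nonneg_of_nonpos (by linarith) (by linarith [h1 j])
        nlinarith [hprod]
      · rw [if_neg hj]
        push_neg at hj
        have hcj : μ j ≤ c := hμ (show (⟨q, hqn⟩ : Fin n) ≤ j by rw [Fin.le_def]; exact hj)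
        exact mul_le_mul_of_nonneg_right hcj (h0 j)
    have step1 : ∑ j : Fin n, μ j * s j ≤
        ∑ j : Fin n, (if (j : ℕ) < q then μ j + c * (s j - 1) else c * s j) :=
      Finset.sum_le_sum fun j _ => key j
    have step2 : ∑ j : Fin n, (if (j : ℕ) < q then μ j + c * (s j - 1) else c * s j)
        = ∑ j ∈ F, (μ j + c * (s j - 1))
          + ∑ j ∈ Finset.univ.filter (fun j : Fin n => ¬ (j : ℕ) < q), c * s j :=
      Finset.sum_ite _ _
    set G := Finset.univ.filter (fun j : Fin n => ¬ (j : ℕ) < q) with hGdef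
    have h2 : ∑ j ∈ F, (μ j + c * (s j - 1)) = ∑ j ∈ F, μ j + c * (∑ j ∈ F, s j) - c * q := by
      rw [Finset.sum_add_distrib, Finset.mul_sum]
      have : ∑ j ∈ F, c * (s j - 1) = ∑ j ∈ F, (c * s j - c) := by
        exact Finset.sum_congr rfl fun j _ => by ring
      rw [this, Finset.sum_sub_distrib, Finset.sum_const, hcard]
      push_cast
      ring
    have h3 : ∑ j ∈ G, c * s j = c * ∑ j ∈ G, s j := by rw [Finset.mul_sum]
    have h4 : ∑ j ∈ F, s j + ∑ j ∈ G, s j = q := by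
      rw [hFdef, hGdef, Finset.sum_filter_add_sum_filter_not, hs, hq]
    have h5 : c * (∑ j ∈ F, s j + ∑ j ∈ G, s j) = c * q := by rw [h4]
    rw [mul_add] at h5
    calc ∑ j, μ j * s j ≤ _ := step1
      _ = _ := step2
      _ ≤ ∑ j ∈ F, μ j := by rw [h2, h3]; linarith


lemma star_mul_self_eq {z : ℂ} : star z * z = (Complex.normSq z : ℂ) := by
  rw [Complex.star_def, Complex.normSq_eq_conj_mul_self]

lemma mul_star_self_eq {z : ℂ} : z * star z = (Complex.normSq z : ℂ) := by
  rw [Complex.star_def, Complex.mul_conj]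

lemma trace_conj_diag {n q' : ℕ} (d : Fin n → ℝ) (W : Matrix (Fin n) (Fin q') ℂ) :
    Matrix.trace (Wᴴ * Matrix.diagonal (fun j => ((d j : ℝ) : ℂ)) * W)
      = ((∑ j, d j * ∑ m, Complex.normSq (W j m) : ℝ) : ℂ) := by
  rw [Matrix.trace, Matrix.mul_assoc]
  have hentry : ∀ m : Fin q', (Wᴴ * (Matrix.diagonal (fun j => ((d j : ℝ) : ℂ)) * W)).diag m
      = ∑ j, ((d j : ℂ) * (Complex.normSq (W j m) : ℂ)) := by
    intro m
    rw [Matrix.diag, Matrix.mul_apply]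
    refine Finset.sum_congr rfl fun j _ => ?_
    rw [Matrix.diagonal_mul, Matrix.conjTranspose_apply]
    rw [show star (W j m) * ((d j : ℂ) * W j m)
        = (d j : ℂ) * (star (W j m) * W j m) by ring, star_mul_self_eq]
  rw [Finset.sum_congr rfl fun m _ => hentry m, Finset.sum_comm]
  push_cast
  refine Finset.sum_congr rfl fun j _ => ?_
  rw [Finset.mul_sum]

lemma colsum_nonneg {n q' : ℕ} (W : Matrix (Fin n) (Fin q') ℂ) (j : Fin n) :
    0 ≤ ∑ m, Complex.normSq (W j m) :=
  Finset.sum_nonneg fun m _ => Complex.normSq_nonneg _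

lemma colsum_le_one {n q' : ℕ} (W : Matrix (Fin n) (Fin q') ℂ) (hW : Wᴴ * W = 1) (j : Fin n) :
    ∑ m, Complex.normSq (W j m) ≤ 1 := by
  set P := W * Wᴴ with hPdef
  have hP2 : P * P = P := by
    rw [hPdef, Matrix.mul_assoc, ← Matrix.mul_assoc Wᴴ W Wᴴ, hW, Matrix.one_mul]
  have hPH : Pᴴ = P := by
    rw [hPdef, Matrix.conjTranspose_mul, Matrix.conjTranspose_conjTranspose]
  have hdiag : P j j = ((∑ m, Complex.normSq (W j m) : ℝ) : ℂ) := by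
    rw [hPdef, Matrix.mul_apply]
    rw [Complex.ofReal_sum]
    refine Finset.sum_congr rfl fun m _ => ?_
    rw [Matrix.conjTranspose_apply, mul_star_self_eq]
  have hPsym : ∀ l, P l j = star (P j l) := by
    intro l
    conv_lhs => rw [← hPH]
    rw [Matrix.conjTranspose_apply]
  set t := ∑ m, Complex.normSq (W j m) with htdef
  have hcalc : ((∑ l, Complex.normSq (P j l) : ℝ) : ℂ) = (P * P) j j := by
    rw [Matrix.mul_apply, Complex.ofReal_sum]
    refine Finset.sum_congr rfl fun l _ => ?_
    rw [hPsym l, mul_star_self_eq]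
  rw [hP2, hdiag] at hcalc
  have ht : ∑ l, Complex.normSq (P j l) = t := by exact_mod_cast hcalc
  have hge : Complex.normSq (P j j) ≤ ∑ l, Complex.normSq (P j l) :=
    Finset.single_le_sum (fun l _ => Complex.normSq_nonneg _) (Finset.mem_univ j)
  rw [hdiag, ht] at hge
  have hnormSq : Complex.normSq ((t : ℂ)) = t ^ 2 := by
    rw [Complex.normSq_ofReal]; ring
  rw [hnormSq] at hge
  have ht0 : 0 ≤ t := colsum_nonneg W j
  nlinarith

lemma colsum_total {n q' : ℕ} (W : Matrix (Fin n) (Fin q') ℂ) (hW : Wᴴ * W = 1) :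
    ∑ j, ∑ m, Complex.normSq (W j m) = (q' : ℝ) := by
  have h := congrArg Matrix.trace hW
  rw [Matrix.trace_one] at h
  have hlhs : Matrix.trace (Wᴴ * W) = ((∑ m, ∑ j, Complex.normSq (W j m) : ℝ) : ℂ) := by
    rw [Matrix.trace, Complex.ofReal_sum]
    refine Finset.sum_congr rfl fun m _ => ?_
    rw [Matrix.diag, Matrix.mul_apply, Complex.ofReal_sum]
    refine Finset.sum_congr rfl fun j _ => ?_
    rw [Matrix.conjTranspose_apply, star_mul_self_eq]
  rw [hlhs] at h
  rw [Finset.sum_comm]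
  rw [Fintype.card_fin] at h
  exact_mod_cast h

lemma sum_mul_le_psum {n : ℕ} (d t : Fin n → ℝ) (q : ℕ)
    (h0 : ∀ j, 0 ≤ t j) (h1 : ∀ j, t j ≤ 1) (hs : ∑ j, t j = ((min q n : ℕ) : ℝ)) :
    ∑ j, d j * t j ≤ psum d q := by
  set σ := Tuple.sort (fun i => -d i) with hσ
  have hanti : Antitone (fun j => d (σ j)) := antitone_comp_sort d
  have hsum : ∑ j, d j * t j = ∑ j, d (σ j) * t (σ j) :=
    (Equiv.sum_comp σ (fun j => d j * t j)).symm
  have hts : ∑ j, t (σ j) = ((min q n : ℕ) : ℝ) := by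
    rw [Equiv.sum_comp σ t]; exact hs
  rw [hsum]
  exact sum_mul_le_sum_filter (fun j => d (σ j)) (fun j => t (σ j)) q hanti
    (fun j => h0 _) (fun j => h1 _) hts

lemma kyFan_upper {n : ℕ} (U : Matrix (Fin n) (Fin n) ℂ)
    (hU : U ∈ Matrix.unitaryGroup (Fin n) ℂ) (d : Fin n → ℝ) (q : ℕ)
    (V : Matrix (Fin n) (Fin (min q n)) ℂ) (hV : Vᴴ * V = 1) :
    (Matrix.trace (Vᴴ * (U * Matrix.diagonal (fun j => ((d j : ℝ) : ℂ)) * star U) * V)).re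
      ≤ psum d q := by
  have hU2 : U * Uᴴ = 1 := by
    have := Matrix.mem_unitaryGroup_iff.mp hU
    rwa [Matrix.star_eq_conjTranspose] at this
  set W := Uᴴ * V with hWdef
  have hWW : Wᴴ * W = 1 := by
    rw [hWdef, Matrix.conjTranspose_mul, Matrix.conjTranspose_conjTranspose,
      Matrix.mul_assoc, ← Matrix.mul_assoc U Uᴴ V, hU2, Matrix.one_mul, hV]
  have hrw : Vᴴ * (U * Matrix.diagonal (fun j => ((d j : ℝ) : ℂ)) * star U) * V
      = Wᴴ * Matrix.diagonal (fun j => ((d j : ℝ) : ℂ)) * W := by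
    rw [hWdef, Matrix.conjTranspose_mul, Matrix.conjTranspose_conjTranspose,
      Matrix.star_eq_conjTranspose]
    simp only [Matrix.mul_assoc]
  rw [hrw, trace_conj_diag, Complex.ofReal_re]
  exact sum_mul_le_psum d (fun j => ∑ m, Complex.normSq (W j m)) q
    (fun j => colsum_nonneg W j) (fun j => colsum_le_one W hWW j)
    (by rw [colsum_total W hWW])

lemma kyFan_attained {n : ℕ} (U : Matrix (Fin n) (Fin n) ℂ)
    (hU : U ∈ Matrix.unitaryGroup (Fin n) ℂ) (d : Fin n → ℝ) (q : ℕ) :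
    ∃ V : Matrix (Fin n) (Fin (min q n)) ℂ, Vᴴ * V = 1 ∧
      (Matrix.trace (Vᴴ * (U * Matrix.diagonal (fun j => ((d j : ℝ) : ℂ)) * star U) * V)).re
        = psum d q := by
  have hU1 : Uᴴ * U = 1 := by
    have := Matrix.mem_unitaryGroup_iff'.mp hU
    rwa [Matrix.star_eq_conjTranspose] at this
  set σ := Tuple.sort (fun i => -d i) with hσ
  set ι : Fin (min q n) → Fin n :=
    fun m => σ ⟨(m : ℕ), lt_of_lt_of_le m.isLt (min_le_right q n)⟩ with hι
  have hιinj : Function.Injective ι := by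
    intro a b hab
    have h2 := σ.injective hab
    simp only [Fin.mk.injEq] at h2
    exact Fin.ext h2
  set V : Matrix (Fin n) (Fin (min q n)) ℂ := Matrix.of (fun j m => U j (ι m)) with hVdef
  have hWent : ∀ (j : Fin n) (m : Fin (min q n)),
      (Uᴴ * V) j m = (1 : Matrix (Fin n) (Fin n) ℂ) j (ι m) := by
    intro j m
    have := congrFun (congrFun hU1 j) (ι m)
    rw [Matrix.mul_apply] at this ⊢
    rw [← this]
    rfl
  have hVV : Vᴴ * V = 1 := by
    ext m m'
    have h1 := congrFun (congrFun hU1 (ι m)) (ι m')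
    rw [Matrix.mul_apply] at h1
    rw [Matrix.mul_apply]
    have h2 : ∑ j, Vᴴ m j * V j m' = ∑ j, Uᴴ (ι m) j * U j (ι m') := by
      refine Finset.sum_congr rfl fun j _ => ?_
      rw [hVdef]
      rfl
    rw [h2, h1]
    rw [Matrix.one_apply, Matrix.one_apply]
    by_cases hmm : m = m'
    · simp [hmm]
    · rw [if_neg hmm, if_neg (fun h => hmm (hιinj h))]
  refine ⟨V, hVV, ?_⟩
  have hrw : Vᴴ * (U * Matrix.diagonal (fun j => ((d j : ℝ) : ℂ)) * star U) * V
      = (Uᴴ * V)ᴴ * Matrix.diagonal (fun j => ((d j : ℝ) : ℂ)) * (Uᴴ * V) := by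
    rw [Matrix.conjTranspose_mul, Matrix.conjTranspose_conjTranspose,
      Matrix.star_eq_conjTranspose]
    simp only [Matrix.mul_assoc]
  rw [hrw, trace_conj_diag, Complex.ofReal_re]
  have hterm : ∀ j : Fin n, ∑ m, Complex.normSq ((Uᴴ * V) j m)
      = ∑ m, (if j = ι m then (1 : ℝ) else 0) := by
    intro j
    refine Finset.sum_congr rfl fun m _ => ?_
    rw [hWent j m, Matrix.one_apply]
    by_cases h : j = ι m
    · simp [h]
    · simp [h]
  have hmain : ∑ j, d j * ∑ m, Complex.normSq ((Uᴴ * V) j m)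
      = ∑ m : Fin (min q n), d (ι m) := by
    rw [Finset.sum_congr rfl fun j _ => by rw [hterm j, Finset.mul_sum]]
    rw [Finset.sum_comm]
    refine Finset.sum_congr rfl fun m _ => ?_
    simp [mul_ite]
  rw [hmain]
  rw [show psum d q = ∑ j ∈ Finset.univ.filter (fun j : Fin n => (j : ℕ) < q), d (σ j) from rfl]
  rw [sum_filter_lt_eq q (fun j => d (σ j))]
/-- The sum of the `q` largest eigenvalues of a Hermitian matrix (junk value `0` if the
matrix is not Hermitian). -/
noncomputable def eigPsum {n : ℕ} (X : Matrix (Fin n) (Fin n) ℂ) (q : ℕ) : ℝ :=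
  if hX : X.IsHermitian then psum hX.eigenvalues q else 0

lemma isHermitian_conj_diag {n : ℕ} (U : Matrix (Fin n) (Fin n) ℂ) (d : Fin n → ℝ) :
    (U * Matrix.diagonal (fun j => ((d j : ℝ) : ℂ)) * star U).IsHermitian := by
  rw [Matrix.star_eq_conjTranspose]
  refine Matrix.isHermitian_mul_mul_conjTranspose U ?_
  refine Matrix.isHermitian_diagonal_iff.mpr fun j => ?_
  exact Complex.conj_ofReal (d j)

lemma trace_le_eigPsum {n : ℕ} (X : Matrix (Fin n) (Fin n) ℂ) (hX : X.IsHermitian) (q : ℕ)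
    (V : Matrix (Fin n) (Fin (min q n)) ℂ) (hV : Vᴴ * V = 1) :
    (Matrix.trace (Vᴴ * X * V)).re ≤ eigPsum X q := by
  rw [eigPsum, dif_pos hX]
  have hXeq : X = (hX.eigenvectorUnitary : Matrix (Fin n) (Fin n) ℂ) *
      Matrix.diagonal (fun j => ((hX.eigenvalues j : ℝ) : ℂ)) *
      star (hX.eigenvectorUnitary : Matrix (Fin n) (Fin n) ℂ) := hX.spectral_theorem
  conv_lhs => rw [hXeq]
  exact kyFan_upper _ (hX.eigenvectorUnitary).2 hX.eigenvalues q V hV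

lemma exists_trace_eq_eigPsum {n : ℕ} (X : Matrix (Fin n) (Fin n) ℂ) (hX : X.IsHermitian)
    (q : ℕ) : ∃ V : Matrix (Fin n) (Fin (min q n)) ℂ, Vᴴ * V = 1 ∧
      (Matrix.trace (Vᴴ * X * V)).re = eigPsum X q := by
  rw [eigPsum, dif_pos hX]
  have hXeq : X = (hX.eigenvectorUnitary : Matrix (Fin n) (Fin n) ℂ) *
      Matrix.diagonal (fun j => ((hX.eigenvalues j : ℝ) : ℂ)) *
      star (hX.eigenvectorUnitary : Matrix (Fin n) (Fin n) ℂ) := hX.spectral_theorem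
  obtain ⟨V, hV, h2⟩ := kyFan_attained _ (hX.eigenvectorUnitary).2 hX.eigenvalues q
  rw [← hXeq] at h2
  exact ⟨V, hV, h2⟩

lemma eigPsum_conj_diag {n : ℕ} (U : Matrix (Fin n) (Fin n) ℂ)
    (hU : U ∈ Matrix.unitaryGroup (Fin n) ℂ) (d : Fin n → ℝ) (q : ℕ) :
    eigPsum (U * Matrix.diagonal (fun j => ((d j : ℝ) : ℂ)) * star U) q = psum d q := by
  set X := U * Matrix.diagonal (fun j => ((d j : ℝ) : ℂ)) * star U with hXdef
  have hX : X.IsHermitian := isHermitian_conj_diag U d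
  refine le_antisymm ?_ ?_
  · obtain ⟨V, hV, h2⟩ := exists_trace_eq_eigPsum X hX q
    rw [← h2]
    exact kyFan_upper U hU d q V hV
  · obtain ⟨V, hV, h2⟩ := kyFan_attained U hU d q
    rw [← h2]
    exact trace_le_eigPsum X hX q V hV

lemma eigPsum_zero {n : ℕ} (q : ℕ) : eigPsum (0 : Matrix (Fin n) (Fin n) ℂ) q = 0 := by
  obtain ⟨V, hV, h2⟩ := exists_trace_eq_eigPsum (0 : Matrix (Fin n) (Fin n) ℂ)
    Matrix.isHermitian_zero q
  rw [← h2, Matrix.mul_zero, Matrix.zero_mul, Matrix.trace_zero]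
  simp

lemma eigPsum_add_le {n : ℕ} (X Y : Matrix (Fin n) (Fin n) ℂ) (hX : X.IsHermitian)
    (hY : Y.IsHermitian) (q : ℕ) :
    eigPsum (X + Y) q ≤ eigPsum X q + eigPsum Y q := by
  obtain ⟨V, hV, h2⟩ := exists_trace_eq_eigPsum (X + Y) (hX.add hY) q
  rw [← h2]
  have hsplit : Vᴴ * (X + Y) * V = Vᴴ * X * V + Vᴴ * Y * V := by
    rw [Matrix.mul_add, Matrix.add_mul]
  rw [hsplit, Matrix.trace_add, Complex.add_re]
  exact add_le_add (trace_le_eigPsum X hX q V hV) (trace_le_eigPsum Y hY q V hV)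

lemma isHermitian_finsum {n k : ℕ} (B : Fin k → Matrix (Fin n) (Fin n) ℂ)
    (hB : ∀ i, (B i).IsHermitian) (s : Finset (Fin k)) :
    (∑ i ∈ s, B i).IsHermitian := by
  induction s using Finset.cons_induction with
  | empty => simp
  | cons b t hb iht => rw [Finset.sum_cons]; exact (hB b).add iht

lemma eigPsum_sum_le {n k : ℕ} (B : Fin k → Matrix (Fin n) (Fin n) ℂ)
    (hB : ∀ i, (B i).IsHermitian) (q : ℕ) (s : Finset (Fin k)) :
    eigPsum (∑ i ∈ s, B i) q ≤ ∑ i ∈ s, eigPsum (B i) q := by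
  classical
  induction s using Finset.cons_induction with
  | empty => simp [eigPsum_zero]
  | cons a s ha ih =>
    rw [Finset.sum_cons, Finset.sum_cons]
    have hsum : (∑ i ∈ s, B i).IsHermitian := isHermitian_finsum B hB s
    calc eigPsum (B a + ∑ i ∈ s, B i) q ≤ eigPsum (B a) q + eigPsum (∑ i ∈ s, B i) q :=
          eigPsum_add_le _ _ (hB a) hsum q
      _ ≤ eigPsum (B a) q + ∑ i ∈ s, eigPsum (B i) q := by linarith [ih]
lemma psum_sum_eq {n k : ℕ} (lam : Fin n → ℝ) (f : Fin k → ℝ → ℝ)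
    (hf : ∀ i, Monotone (f i)) (q : ℕ) :
    ∑ i : Fin k, psum (fun j => f i (lam j)) q = psum (fun j => ∑ i, f i (lam j)) q := by
  set σ := Tuple.sort (fun i => -lam i) with hσ
  have hlam : Antitone (fun j => lam (σ j)) := antitone_comp_sort lam
  have h1 : ∀ i : Fin k, psum (fun j => f i (lam j)) q
      = ∑ j ∈ Finset.univ.filter (fun j : Fin n => (j : ℕ) < q), f i (lam (σ j)) :=
    fun i => psum_eq_sum_of_antitone _ σ (fun a b hab => hf i (hlam hab)) q
  have h2 : psum (fun j => ∑ i, f i (lam j)) q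
      = ∑ j ∈ Finset.univ.filter (fun j : Fin n => (j : ℕ) < q), ∑ i, f i (lam (σ j)) :=
    psum_eq_sum_of_antitone _ σ
      (fun a b hab => Finset.sum_le_sum fun i _ => hf i (hlam hab)) q
  rw [Finset.sum_congr rfl (fun i _ => h1 i), h2, Finset.sum_comm]

lemma trace_conj_diag_full {n : ℕ} (U : Matrix (Fin n) (Fin n) ℂ)
    (hU : U ∈ Matrix.unitaryGroup (Fin n) ℂ) (d : Fin n → ℝ) :
    Matrix.trace (U * Matrix.diagonal (fun j => ((d j : ℝ) : ℂ)) * star U)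
      = ∑ j, ((d j : ℝ) : ℂ) := by
  have hU1 : star U * U = 1 := Matrix.mem_unitaryGroup_iff'.mp hU
  rw [Matrix.trace_mul_comm, ← Matrix.mul_assoc, hU1, Matrix.one_mul, Matrix.trace_diagonal]

lemma sum_diagonal_eq {n k : ℕ} (v : Fin k → Fin n → ℝ) :
    ∑ i : Fin k, Matrix.diagonal (fun j => ((v i j : ℝ) : ℂ))
      = Matrix.diagonal (fun j => ((∑ i, v i j : ℝ) : ℂ)) := by
  ext j l
  by_cases h : j = l
  · subst h
    simp [Matrix.diagonal_apply, Matrix.sum_apply]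
  · simp [Matrix.diagonal_apply, h, Matrix.sum_apply]

/-- `X` majorizes `Y`: the partial sums of the decreasingly ordered eigenvalues of `X`
dominate those of `Y`, and the traces are equal. -/
def Maj {n : ℕ} (X Y : Matrix (Fin n) (Fin n) ℂ) : Prop :=
  (∀ q : ℕ, eigPsum Y q ≤ eigPsum X q) ∧ X.trace = Y.trace

/-- if `A₁, …, A_k` are Hermitian matrices which are all nondecreasing
functions `A i = f i (A)` of one fixed Hermitian matrix `A` (functional calculus in a
common eigenbasis of `A`), and `B₁, …, B_k` are Hermitian matrices with `A i` majorizing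
`B i` for each `i`, then `∑ i, A i` majorizes `∑ i, B i`. -/
theorem maj_sum_of_simultaneously_ordered {n k : ℕ}
    (A : Matrix (Fin n) (Fin n) ℂ) (hA : A.IsHermitian)
    (f : Fin k → ℝ → ℝ) (hf : ∀ i, Monotone (f i))
    (B : Fin k → Matrix (Fin n) (Fin n) ℂ) (hB : ∀ i, (B i).IsHermitian)
    (hmaj : ∀ i : Fin k,
      Maj ((hA.eigenvectorUnitary : Matrix (Fin n) (Fin n) ℂ) *
            Matrix.diagonal (fun j => ((f i (hA.eigenvalues j) : ℝ) : ℂ)) *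
            star (hA.eigenvectorUnitary : Matrix (Fin n) (Fin n) ℂ))
          (B i)) :
    Maj (∑ i : Fin k,
          (hA.eigenvectorUnitary : Matrix (Fin n) (Fin n) ℂ) *
            Matrix.diagonal (fun j => ((f i (hA.eigenvalues j) : ℝ) : ℂ)) *
            star (hA.eigenvectorUnitary : Matrix (Fin n) (Fin n) ℂ))
        (∑ i : Fin k, B i) := by
  set U : Matrix (Fin n) (Fin n) ℂ := (hA.eigenvectorUnitary : Matrix (Fin n) (Fin n) ℂ)
    with hUdef
  have hU : U ∈ Matrix.unitaryGroup (Fin n) ℂ := (hA.eigenvectorUnitary).2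
  set lam : Fin n → ℝ := hA.eigenvalues with hlamdef
  have hsumA : ∑ i : Fin k, U * Matrix.diagonal (fun j => ((f i (lam j) : ℝ) : ℂ)) * star U
      = U * Matrix.diagonal (fun j => ((∑ i, f i (lam j) : ℝ) : ℂ)) * star U := by
    rw [← Finset.sum_mul, ← Matrix.mul_sum, sum_diagonal_eq (fun i j => f i (lam j))]
  constructor
  · intro q
    calc eigPsum (∑ i, B i) q ≤ ∑ i, eigPsum (B i) q :=
          eigPsum_sum_le B hB q Finset.univ
      _ ≤ ∑ i, eigPsum (U * Matrix.diagonal (fun j => ((f i (lam j) : ℝ) : ℂ)) * star U) q :=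
          Finset.sum_le_sum fun i _ => (hmaj i).1 q
      _ = ∑ i, psum (fun j => f i (lam j)) q :=
          Finset.sum_congr rfl fun i _ => eigPsum_conj_diag U hU (fun j => f i (lam j)) q
      _ = psum (fun j => ∑ i, f i (lam j)) q := psum_sum_eq lam f hf q
      _ = eigPsum (U * Matrix.diagonal (fun j => ((∑ i, f i (lam j) : ℝ) : ℂ)) * star U) q :=
          (eigPsum_conj_diag U hU (fun j => ∑ i, f i (lam j)) q).symm
      _ = eigPsum (∑ i, U * Matrix.diagonal (fun j => ((f i (lam j) : ℝ) : ℂ)) * star U) q := by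
          rw [hsumA]
  · rw [Matrix.trace_sum, Matrix.trace_sum]
    refine Finset.sum_congr rfl fun i _ => ?_
    exact (hmaj i).2
end

section
/- The sum of the q largest eigenvalues of a Hermitian matrix X equals the maximum of ∑_{j=1}^q ⟨v_j, X v_j⟩ over all orthonormal families v_1, ..., v_q (Ky Fan maximum principle). -/
open Matrix

section Helpers

variable {n : ℕ} {X : Matrix (Fin n) (Fin n) ℂ} (hX : X.IsHermitian)

lemma kyFan_inner_eq_dot (x y : EuclideanSpace ℂ (Fin n)) :
    (inner ℂ x y : ℂ) = star (WithLp.equiv 2 _ x) ⬝ᵥ (WithLp.equiv 2 _ y) :=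
  (EuclideanSpace.inner_eq_star_dotProduct x y).trans (dotProduct_comm _ _)

lemma kyFan_basis_dot (i : Fin n) (x : EuclideanSpace ℂ (Fin n)) :
    star (⇑(hX.eigenvectorBasis i)) ⬝ᵥ (WithLp.equiv 2 _ x)
      = hX.eigenvectorBasis.repr x i := by
  rw [hX.eigenvectorBasis.repr_apply_apply, kyFan_inner_eq_dot]
  rfl

lemma kyFan_repr_mulVec (x : EuclideanSpace ℂ (Fin n)) (i : Fin n) :
    star (⇑(hX.eigenvectorBasis i)) ⬝ᵥ X.mulVec (WithLp.equiv 2 _ x)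
      = (hX.eigenvalues i : ℂ) * hX.eigenvectorBasis.repr x i := by
  rw [dotProduct_mulVec]
  have h1 : star (⇑(hX.eigenvectorBasis i)) ᵥ* X
      = star (X *ᵥ ⇑(hX.eigenvectorBasis i)) := by
    rw [star_mulVec, hX.eq]
  rw [h1, hX.mulVec_eigenvectorBasis, star_smul, smul_dotProduct, kyFan_basis_dot hX]
  simp [Complex.real_smul]

lemma kyFan_inner_repr (B : OrthonormalBasis (Fin n) ℂ (EuclideanSpace ℂ (Fin n)))
    (x y : EuclideanSpace ℂ (Fin n)) :
    (inner ℂ x y : ℂ) = ∑ i, starRingEnd ℂ (B.repr x i) * B.repr y i := by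
  rw [← B.repr.inner_map_map x y, EuclideanSpace.inner_eq_star_dotProduct]
  simp [dotProduct, mul_comm]

lemma kyFan_conj_mul_self_re (z : ℂ) : (starRingEnd ℂ z * z).re = ‖z‖ ^ 2 := by
  rw [← Complex.normSq_eq_conj_mul_self, Complex.ofReal_re, ← Complex.sq_norm]

lemma kyFan_quad (x : EuclideanSpace ℂ (Fin n)) :
    (star (WithLp.equiv 2 _ x) ⬝ᵥ X.mulVec (WithLp.equiv 2 _ x)).re
      = ∑ i, hX.eigenvalues i * ‖hX.eigenvectorBasis.repr x i‖ ^ 2 := by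
  set B := hX.eigenvectorBasis with hB
  set y : EuclideanSpace ℂ (Fin n) :=
    (WithLp.equiv 2 _).symm (X.mulVec (WithLp.equiv 2 _ x)) with hy
  have h0 : star (WithLp.equiv 2 _ x) ⬝ᵥ X.mulVec (WithLp.equiv 2 _ x) = inner ℂ x y := by
    rw [kyFan_inner_eq_dot]; congr 1
  have hrepr : ∀ i, B.repr y i = (hX.eigenvalues i : ℂ) * B.repr x i := by
    intro i
    rw [← kyFan_basis_dot hX i y]
    have : (WithLp.equiv 2 (Fin n → ℂ)) y = X.mulVec (WithLp.equiv 2 _ x) := rfl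
    rw [this, kyFan_repr_mulVec hX]
  rw [h0, kyFan_inner_repr B x y, Complex.re_sum]
  congr 1; funext i
  rw [hrepr i]
  have h2 : starRingEnd ℂ (B.repr x i) * ((hX.eigenvalues i : ℂ) * B.repr x i)
      = (hX.eigenvalues i : ℂ) * (starRingEnd ℂ (B.repr x i) * B.repr x i) := by ring
  rw [h2, Complex.re_ofReal_mul, kyFan_conj_mul_self_re]

lemma kyFan_norm_repr (B : OrthonormalBasis (Fin n) ℂ (EuclideanSpace ℂ (Fin n)))
    (x : EuclideanSpace ℂ (Fin n)) :
    ∑ i, ‖B.repr x i‖ ^ 2 = (inner ℂ x x : ℂ).re := by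
  rw [kyFan_inner_repr B x x, Complex.re_sum]
  congr 1; funext i
  rw [kyFan_conj_mul_self_re]

lemma kyFan_filter_eq_map {n q : ℕ} (hq : q ≤ n) :
    Finset.univ.filter (fun j : Fin n => (j : ℕ) < q)
      = Finset.univ.map (Fin.castLEEmb hq) := by
  ext j
  simp only [Finset.mem_filter, Finset.mem_univ, true_and, Finset.mem_map]
  constructor
  · intro h
    refine ⟨⟨(j : ℕ), h⟩, ?_⟩
    simp [Fin.castLEEmb]
  · rintro ⟨i, rfl⟩
    exact i.2

lemma kyFan_abel_ineq {n q : ℕ} (hq : q ≤ n) (lam : Fin n → ℝ) (hmono : Antitone lam)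
    (c : Fin n → ℝ) (h0 : ∀ i, 0 ≤ c i) (h1 : ∀ i, c i ≤ 1) (hsum : ∑ i, c i = q) :
    ∑ i, lam i * c i ≤ ∑ j ∈ Finset.univ.filter (fun j : Fin n => (j : ℕ) < q), lam j := by
  rcases Nat.eq_zero_or_pos q with hq0 | hq0
  · subst hq0
    have : ∀ i, c i = 0 := by
      intro i
      have := Finset.sum_eq_zero_iff_of_nonneg (fun i _ => h0 i) |>.mp (by simpa using hsum)
      exact this i (Finset.mem_univ i)
    simp [this]
  · set t : ℝ := lam ⟨q - 1, by omega⟩ with ht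
    have hcard : (Finset.univ.filter (fun j : Fin n => (j : ℕ) < q)).card = q := by
      rw [kyFan_filter_eq_map hq]; simp
    have key : ∑ i, (lam i - t) * c i
        ≤ ∑ j ∈ Finset.univ.filter (fun j : Fin n => (j : ℕ) < q), (lam j - t) := by
      rw [← Finset.sum_filter_add_sum_filter_not Finset.univ (fun j : Fin n => (j : ℕ) < q)]
      have hA : ∑ j ∈ Finset.univ.filter (fun j : Fin n => (j : ℕ) < q), (lam j - t) * c j
          ≤ ∑ j ∈ Finset.univ.filter (fun j : Fin n => (j : ℕ) < q), (lam j - t) := by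
        apply Finset.sum_le_sum
        intro j hj
        simp only [Finset.mem_filter] at hj
        have hjt : t ≤ lam j := by
          apply hmono
          simp only [Fin.le_def]
          omega
        nlinarith [h0 j, h1 j]
      have hB : ∑ j ∈ Finset.univ.filter (fun j : Fin n => ¬ (j : ℕ) < q), (lam j - t) * c j
          ≤ 0 := by
        apply Finset.sum_nonpos
        intro j hj
        simp only [Finset.mem_filter] at hj
        have hjt : lam j ≤ t := by
          apply hmono
          simp only [Fin.le_def]
          omega
        nlinarith [h0 j]
      linarith
    have e1 : ∑ i, (lam i - t) * c i = ∑ i, lam i * c i - t * q := by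
      rw [← hsum, Finset.mul_sum, ← Finset.sum_sub_distrib]
      congr 1; funext i; ring
    have e2 : ∑ j ∈ Finset.univ.filter (fun j : Fin n => (j : ℕ) < q), (lam j - t)
        = (∑ j ∈ Finset.univ.filter (fun j : Fin n => (j : ℕ) < q), lam j) - t * q := by
      rw [Finset.sum_sub_distrib, Finset.sum_const, hcard]
      ring
    rw [e1, e2] at key
    linarith

end Helpers

/-- Ky Fan maximum principle: the sum of the `q` largest eigenvalues of a
Hermitian matrix `X` is the maximum of `∑ j, ⟨v j, X (v j)⟩` over all orthonormal families
`v 1, …, v q`. -/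
theorem kyFan_max_principle {n : ℕ} (X : Matrix (Fin n) (Fin n) ℂ)
    (hX : X.IsHermitian) (q : ℕ) (hq : q ≤ n) :
    IsGreatest
      {r : ℝ | ∃ v : Fin q → (Fin n → ℂ),
        (∀ i j, star (v i) ⬝ᵥ v j = if i = j then (1 : ℂ) else 0) ∧
        r = ∑ j, (star (v j) ⬝ᵥ X.mulVec (v j)).re}
      (eigPsum X q) := by
  set B := hX.eigenvectorBasis with hB
  set μ := hX.eigenvalues with hμ
  set σ := Tuple.sort (fun i => -μ i) with hσ
  have heig : eigPsum X q = psum μ q := by rw [eigPsum, dif_pos hX]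
  have hpsum : psum μ q = ∑ j : Fin q, μ (σ (Fin.castLE hq j)) := by
    rw [psum, kyFan_filter_eq_map hq, Finset.sum_map]
    rfl
  constructor
  · -- membership
    refine ⟨fun j => ⇑(B (σ (Fin.castLE hq j))), ?_, ?_⟩
    · intro i j
      have h1 : star (⇑(B (σ (Fin.castLE hq i)))) ⬝ᵥ ⇑(B (σ (Fin.castLE hq j)))
          = (inner ℂ (B (σ (Fin.castLE hq i))) (B (σ (Fin.castLE hq j))) : ℂ) :=
        (kyFan_inner_eq_dot _ _).symm
      rw [h1, orthonormal_iff_ite.mp B.orthonormal]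
      congr 1
      simp only [eq_iff_iff]
      constructor
      · intro h
        have := σ.injective h
        exact Fin.castLE_injective hq this
      · rintro rfl; rfl
    · rw [heig, hpsum]
      congr 1; funext j
      set k := σ (Fin.castLE hq j)
      have h2 : star (⇑(B k)) ⬝ᵥ X.mulVec (⇑(B k)) = (μ k : ℂ) * B.repr (B k) k := by
        exact kyFan_repr_mulVec hX (B k) k
      rw [h2]
      simp [OrthonormalBasis.repr_self]
  · -- upper bound
    rintro r ⟨v, hv, rfl⟩
    set w : Fin q → EuclideanSpace ℂ (Fin n) := fun j => (WithLp.equiv 2 _).symm (v j) with hw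
    have hwv : ∀ j, WithLp.equiv 2 (Fin n → ℂ) (w j) = v j := fun j => rfl
    have hinner : ∀ i j, (inner ℂ (w i) (w j) : ℂ) = if i = j then 1 else 0 := by
      intro i j
      rw [kyFan_inner_eq_dot, hwv, hwv]
      exact hv i j
    have hworth : Orthonormal ℂ w := orthonormal_iff_ite.mpr hinner
    set c : Fin n → ℝ := fun i => ∑ j, ‖B.repr (w j) i‖ ^ 2 with hc
    have hr : ∑ j, (star (v j) ⬝ᵥ X.mulVec (v j)).re = ∑ i, μ i * c i := by
      have h3 : ∀ j, (star (v j) ⬝ᵥ X.mulVec (v j)).re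
          = ∑ i, μ i * ‖B.repr (w j) i‖ ^ 2 := by
        intro j
        rw [← hwv j]
        exact kyFan_quad hX (w j)
      rw [Finset.sum_congr rfl (fun j _ => h3 j), Finset.sum_comm]
      congr 1; funext i
      rw [hc, Finset.mul_sum]
    rw [hr, heig]
    have hmono : Antitone (fun i => μ (σ i)) := by
      intro a b hab
      have := Tuple.monotone_sort (fun i => -μ i) hab
      simpa using this
    have hre : ∑ i, μ i * c i = ∑ i, μ (σ i) * c (σ i) :=
      (Equiv.sum_comp σ (fun i => μ i * c i)).symm
    rw [hre]
    have h0 : ∀ i, 0 ≤ c (σ i) := fun i =>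
      Finset.sum_nonneg fun j _ => sq_nonneg _
    have h1 : ∀ i, c (σ i) ≤ 1 := by
      intro i
      have hb : ∑ j, ‖(inner ℂ (w j) (B (σ i)) : ℂ)‖ ^ 2 ≤ ‖B (σ i)‖ ^ 2 :=
        hworth.sum_inner_products_le (B (σ i))
      have hbn : ‖B (σ i)‖ = 1 := B.orthonormal.1 _
      rw [hbn] at hb
      have : c (σ i) = ∑ j, ‖(inner ℂ (w j) (B (σ i)) : ℂ)‖ ^ 2 := by
        simp only [hc]
        refine Finset.sum_congr rfl fun j _ => ?_
        rw [B.repr_apply_apply, ← norm_inner_symm]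
      rw [this]
      simpa using hb
    have hsum : ∑ i, c (σ i) = (q : ℝ) := by
      rw [Equiv.sum_comp σ c]
      have : ∑ i, c i = ∑ j : Fin q, ∑ i, ‖B.repr (w j) i‖ ^ 2 := by
        simp only [hc]
        rw [Finset.sum_comm]
      rw [this]
      have h4 : ∀ j : Fin q, ∑ i, ‖B.repr (w j) i‖ ^ 2 = 1 := by
        intro j
        rw [kyFan_norm_repr B (w j), hinner j j]
        simp
      rw [Finset.sum_congr rfl (fun j _ => h4 j)]
      simp
    have := kyFan_abel_ineq hq (fun i => μ (σ i)) hmono (fun i => c (σ i)) h0 h1 hsum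
    refine this.trans ?_
    rw [hpsum, kyFan_filter_eq_map hq, Finset.sum_map]
    rfl
end

section
/- Define the map T^k from operators on H_M to operators on H_{M+k} by T^k(Γ) = (M+k)!/M! · P_{M+k}((⊗^k I_{ℂ^N}) ⊗ Γ)P_{M+k}. Then Tr_{H_{M+k}} T^k(Γ) = [(M+k+N−1)!/(M+N−1)!] · Tr_{H_M} Γ. -/
open Matrix

/-- The matrix of the permutation `σ` acting on `⊗^M ℂ^N`, realized concretely on
`(Fin M → Fin N) → ℂ` (tensors written in the standard product basis). -/
def permMat (M N : ℕ) (σ : Equiv.Perm (Fin M)) :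
    Matrix (Fin M → Fin N) (Fin M → Fin N) ℂ :=
  Matrix.of fun i j => if i ∘ σ = j then (1 : ℂ) else 0

/-- The symmetrization projection `P_M = (1/M!) ∑_σ σ` on `⊗^M ℂ^N`. -/
noncomputable def symProj (M N : ℕ) : Matrix (Fin M → Fin N) (Fin M → Fin N) ℂ :=
  ((M.factorial : ℂ))⁻¹ • ∑ σ : Equiv.Perm (Fin M), permMat M N σ

/-- The operator `(⊗^k I_{ℂ^N}) ⊗ Γ` on `⊗^{k+M} ℂ^N`, for an operator `Γ` on
`⊗^M ℂ^N` (the first `k` tensor factors carry the identity). -/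
def extendOp (N M k : ℕ) (Γ : Matrix (Fin M → Fin N) (Fin M → Fin N) ℂ) :
    Matrix (Fin (k + M) → Fin N) (Fin (k + M) → Fin N) ℂ :=
  Matrix.of fun i j =>
    (if (fun a : Fin k => i (Fin.castAdd M a)) = (fun a : Fin k => j (Fin.castAdd M a))
      then (1 : ℂ) else 0) *
    Γ (fun b : Fin M => i (Fin.natAdd k b)) (fun b : Fin M => j (Fin.natAdd k b))

/-- The map `T^k(Γ) = ((M+k)!/M!) P_{M+k} ((⊗^k I) ⊗ Γ) P_{M+k}` from operators on the
symmetric subspace `H_M` to operators on `H_{M+k}` (the universal cloning map, up to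
normalization). -/
noncomputable def Tk (N M k : ℕ) (Γ : Matrix (Fin M → Fin N) (Fin M → Fin N) ℂ) :
    Matrix (Fin (k + M) → Fin N) (Fin (k + M) → Fin N) ℂ :=
  (((M + k).factorial : ℂ) / (M.factorial : ℂ)) •
    (symProj (k + M) N * extendOp N M k Γ * symProj (k + M) N)

namespace CloneAux

open Equiv


variable {N : ℕ}

/-- general permutation matrix -/
def gPerm (N : ℕ) (α : Type) [DecidableEq α] [Fintype α] (σ : Equiv.Perm α) :
    Matrix (α → Fin N) (α → Fin N) ℂ :=
  Matrix.of fun i j => if i ∘ σ = j then (1 : ℂ) else 0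

noncomputable def gProj (N : ℕ) (α : Type) [DecidableEq α] [Fintype α] :
    Matrix (α → Fin N) (α → Fin N) ℂ :=
  (((Fintype.card α).factorial : ℂ))⁻¹ • ∑ σ : Equiv.Perm α, gPerm N α σ

variable {α : Type} [DecidableEq α] [Fintype α]

lemma gPerm_mul_apply (σ : Perm α) (A : Matrix (α → Fin N) (α → Fin N) ℂ)
    (i j : α → Fin N) : (gPerm N α σ * A) i j = A (i ∘ σ) j := by
  rw [mul_apply, Finset.sum_eq_single (i ∘ ⇑σ)]
  · simp [gPerm]
  · intro b _ hb
    simp only [gPerm, of_apply]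
    rw [if_neg (fun h => hb h.symm), zero_mul]
  · simp

lemma gPerm_mul_gPerm (σ τ : Perm α) :
    gPerm N α σ * gPerm N α τ = gPerm N α (σ * τ) := by
  ext i j
  rw [gPerm_mul_apply]
  simp [gPerm, Equiv.Perm.coe_mul, Function.comp_assoc]
  congr

lemma gPerm_one : gPerm N α 1 = (1 : Matrix (α → Fin N) (α → Fin N) ℂ) := by
  ext i j
  simp [gPerm, Matrix.one_apply]

lemma gPerm_mul_gProj (σ : Perm α) : gPerm N α σ * gProj N α = gProj N α := by
  unfold gProj
  rw [Matrix.mul_smul, Finset.mul_sum]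
  congr 1
  exact Fintype.sum_equiv (Equiv.mulLeft σ) _ _ (fun τ => by rw [gPerm_mul_gPerm]; rfl)

lemma gProj_mul_gPerm (σ : Perm α) : gProj N α * gPerm N α σ = gProj N α := by
  unfold gProj
  rw [Matrix.smul_mul, Finset.sum_mul]
  congr 1
  exact Fintype.sum_equiv (Equiv.mulRight σ) _ _ (fun τ => by rw [gPerm_mul_gPerm]; rfl)

lemma gProj_mul_gProj : gProj N α * gProj N α = gProj N α := by
  nth_rewrite 1 [gProj]
  rw [Matrix.smul_mul, Finset.sum_mul]
  simp_rw [gPerm_mul_gProj]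
  rw [Finset.sum_const, Finset.card_univ, Fintype.card_perm,
    ← Nat.cast_smul_eq_nsmul ℂ, smul_smul,
    inv_mul_cancel₀ (by exact_mod_cast Nat.factorial_ne_zero _), one_smul]


-- chunk 2
variable {β : Type} [DecidableEq β] [Fintype β]

/-- functions on `Option β` as a pair of a value and a function on `β`. -/
def optFun (N : ℕ) (β : Type) : (Fin N × (β → Fin N)) ≃ (Option β → Fin N) where
  toFun p o := o.elim p.1 p.2
  invFun i := (i none, i ∘ some)
  left_inv p := rfl
  right_inv i := by funext o; cases o <;> rfl

@[simp] lemma optFun_none (p : Fin N × (β → Fin N)) : optFun N β p none = p.1 := rfl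
@[simp] lemma optFun_some (p : Fin N × (β → Fin N)) (b : β) :
    optFun N β p (some b) = p.2 b := rfl
@[simp] lemma optFun_comp_some (p : Fin N × (β → Fin N)) :
    (optFun N β p) ∘ some = p.2 := rfl

/-- the extension `I ⊗ X` on `Option β`. -/
def E1 (N : ℕ) {β : Type} [DecidableEq β] [Fintype β]
    (X : Matrix (β → Fin N) (β → Fin N) ℂ) :
    Matrix (Option β → Fin N) (Option β → Fin N) ℂ :=
  Matrix.of fun i j => (if i none = j none then (1 : ℂ) else 0) * X (i ∘ some) (j ∘ some)

lemma trace_E1 (X : Matrix (β → Fin N) (β → Fin N) ℂ) :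
    (E1 N X).trace = (N : ℂ) * X.trace := by
  rw [Matrix.trace]
  have : ∀ i : Option β → Fin N, (E1 N X).diag i = X (i ∘ some) (i ∘ some) := by
    intro i; simp [E1, Matrix.diag]
  simp_rw [this]
  rw [← Equiv.sum_comp (optFun N β) (fun i => X (i ∘ some) (i ∘ some))]
  simp only [optFun_comp_some]
  rw [Fintype.sum_prod_type]
  dsimp only
  rw [Finset.sum_const, Finset.card_univ, Fintype.card_fin, nsmul_eq_mul, Matrix.trace]
  rfl

lemma trace_swap_E1 (q : β) (X : Matrix (β → Fin N) (β → Fin N) ℂ) :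
    (gPerm N (Option β) (Equiv.swap none (some q)) * E1 N X).trace = X.trace := by
  rw [Matrix.trace]
  have key : ∀ i : Option β → Fin N,
      (gPerm N (Option β) (Equiv.swap none (some q)) * E1 N X).diag i
        = (if i (some q) = i none then (1 : ℂ) else 0) * X (i ∘ some) (i ∘ some) := by
    intro i
    rw [Matrix.diag, gPerm_mul_apply]
    simp only [E1, of_apply, Function.comp_apply, Equiv.swap_apply_left]
    by_cases h : i (some q) = i none
    · rw [if_pos h]
      have harg : (i ∘ ⇑(Equiv.swap none (some q))) ∘ some = i ∘ some := by
        funext b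
        by_cases hb : b = q
        · subst hb; simp [Equiv.swap_apply_right, h]
        · have hb' : (some b : Option β) ≠ some q := by simpa using hb
          rw [Function.comp_apply, Function.comp_apply,
            Equiv.swap_apply_of_ne_of_ne (by simp) hb']
          rfl
      rw [harg]
    · rw [if_neg h, zero_mul, zero_mul]
  simp_rw [key]
  rw [← Equiv.sum_comp (optFun N β)
    (fun i => (if i (some q) = i none then (1 : ℂ) else 0) * X (i ∘ some) (i ∘ some))]
  simp only [optFun_comp_some, optFun_none, optFun_some]
  rw [Fintype.sum_prod_type]
  dsimp only
  rw [Finset.sum_comm, Matrix.trace]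
  apply Finset.sum_congr rfl
  intro a _
  simp [ite_mul, Matrix.diag]
  rw [Finset.sum_eq_single (a q)]
  · simp
  · intro b _ hb; simp [Ne.symm hb]
  · simp

lemma gPerm_option_mul_E1 (e : Perm β) (X : Matrix (β → Fin N) (β → Fin N) ℂ) :
    gPerm N (Option β) e.optionCongr * E1 N X = E1 N (gPerm N β e * X) := by
  ext i j
  rw [gPerm_mul_apply]
  simp only [E1, of_apply]
  rw [gPerm_mul_apply]
  have h1 : (i ∘ ⇑e.optionCongr) none = i none := by simp
  have h2 : (i ∘ ⇑e.optionCongr) ∘ some = (i ∘ some) ∘ ⇑e := by funext b; simp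
  rw [h1, h2]

lemma E1_smul (c : ℂ) (X : Matrix (β → Fin N) (β → Fin N) ℂ) :
    E1 N (c • X) = c • E1 N X := by
  ext i j
  simp only [E1, of_apply, Matrix.smul_apply, smul_eq_mul]
  ring

lemma E1_sum {ι : Type*} (s : Finset ι) (f : ι → Matrix (β → Fin N) (β → Fin N) ℂ) :
    E1 N (∑ x ∈ s, f x) = ∑ x ∈ s, E1 N (f x) := by
  ext i j
  simp only [E1, of_apply, Matrix.sum_apply, Finset.mul_sum]

lemma gProj_mul_E1_gProj (X : Matrix (β → Fin N) (β → Fin N) ℂ) :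
    gProj N (Option β) * E1 N (gProj N β * X) = gProj N (Option β) * E1 N X := by
  have hexp : gProj N β * X
      = ((Fintype.card β).factorial : ℂ)⁻¹ • ∑ e : Perm β, gPerm N β e * X := by
    rw [gProj, Matrix.smul_mul, Finset.sum_mul]
  rw [hexp, E1_smul, E1_sum, Matrix.mul_smul, Finset.mul_sum]
  simp_rw [← gPerm_option_mul_E1, ← Matrix.mul_assoc, gProj_mul_gPerm]
  rw [Finset.sum_const, Finset.card_univ, Fintype.card_perm,
    ← Nat.cast_smul_eq_nsmul ℂ, smul_smul,
    inv_mul_cancel₀ (by exact_mod_cast Nat.factorial_ne_zero _), one_smul]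

lemma lemA (X : Matrix (β → Fin N) (β → Fin N) ℂ)
    (hX : gProj N β * X = X) :
    (gProj N (Option β) * E1 N X).trace
      = ((N : ℂ) + (Fintype.card β : ℂ)) / ((Fintype.card β : ℂ) + 1) * X.trace := by
  have hXe : ∀ e : Perm β, gPerm N β e * X = X := by
    intro e
    rw [← hX, ← Matrix.mul_assoc, gPerm_mul_gProj]
  rw [gProj, Matrix.smul_mul, Finset.sum_mul, Matrix.trace_smul, Matrix.trace_sum]
  rw [← Equiv.sum_comp (Equiv.Perm.decomposeOption (α := β)).symm
    (fun σ => (gPerm N (Option β) σ * E1 N X).trace)]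
  rw [Fintype.sum_prod_type]
  have hterm : ∀ (p : Option β) (e : Perm β),
      (gPerm N (Option β) (Equiv.Perm.decomposeOption.symm (p, e)) * E1 N X).trace
        = (gPerm N (Option β) (Equiv.swap none p) * E1 N X).trace := by
    intro p e
    rw [Equiv.Perm.decomposeOption_symm_apply, ← gPerm_mul_gPerm, Matrix.mul_assoc,
      gPerm_option_mul_E1, hXe]
  simp_rw [hterm]
  simp_rw [Finset.sum_const, Finset.card_univ, Fintype.card_perm]
  rw [Fintype.sum_option]
  have h1 : (gPerm N (Option β) (Equiv.swap none none) * E1 N X).trace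
      = (N : ℂ) * X.trace := by
    rw [Equiv.swap_self]
    rw [show (Equiv.refl (Option β)) = (1 : Perm (Option β)) from rfl, gPerm_one, one_mul]
    exact trace_E1 X
  have h2 : ∀ q : β, (gPerm N (Option β) (Equiv.swap none (some q)) * E1 N X).trace
      = X.trace := fun q => trace_swap_E1 q X
  simp_rw [h1, h2]
  rw [Finset.sum_const, Finset.card_univ]
  have hcard : Fintype.card (Option β) = Fintype.card β + 1 := by simp
  rw [hcard]
  have hb : ((Fintype.card β : ℂ) + 1) ≠ 0 := by
    have : ((Fintype.card β + 1 : ℕ) : ℂ) ≠ 0 := Nat.cast_ne_zero.mpr (Nat.succ_ne_zero _)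
    push_cast at this
    exact this
  have hf : ((Fintype.card β).factorial : ℂ) ≠ 0 := by
    exact_mod_cast Nat.factorial_ne_zero _
  rw [Nat.factorial_succ]
  push_cast
  simp only [nsmul_eq_mul, smul_eq_mul]
  field_simp


-- chunk 3 : transports along index equivalences

def fe {α β : Type} (N : ℕ) (d : α ≃ β) : (β → Fin N) ≃ (α → Fin N) where
  toFun i := i ∘ d
  invFun i := i ∘ d.symm
  left_inv i := by funext x; simp
  right_inv i := by funext x; simp

@[simp] lemma fe_apply {α β : Type} {N : ℕ} (d : α ≃ β) (i : β → Fin N) (x : α) :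
    fe N d i x = i (d x) := rfl

lemma trace_submatrix_fe {α β : Type} [DecidableEq α] [Fintype α] [DecidableEq β] [Fintype β]
    (d : α ≃ β) (A : Matrix (α → Fin N) (α → Fin N) ℂ) :
    (A.submatrix (fe N d) (fe N d)).trace = A.trace := by
  rw [Matrix.trace, Matrix.trace, ← Equiv.sum_comp (fe N d) (fun x => A.diag x)]
  rfl

lemma gProj_submatrix {α β : Type} [DecidableEq α] [Fintype α] [DecidableEq β] [Fintype β]
    (d : α ≃ β) :
    (gProj N α).submatrix (fe N d) (fe N d) = gProj N β := by
  ext i j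
  simp only [Matrix.submatrix_apply, gProj, Matrix.smul_apply, Matrix.sum_apply, smul_eq_mul]
  rw [Fintype.card_congr d]
  congr 1
  refine Fintype.sum_equiv d.permCongr _ _ (fun σ => ?_)
  simp only [gPerm, of_apply]
  refine if_congr ?_ rfl rfl
  constructor
  · intro hh
    funext x
    have := congrFun hh (d.symm x)
    simpa using this
  · intro hh
    funext x
    have := congrFun hh (d x)
    simpa using this

/-- the index equivalence splitting off the first of the `k+1` identity slots. -/
def dEquiv (k M : ℕ) : Fin (k+1+M) ≃ Option (Fin (k+M)) :=
  (finCongr (by omega : k+1+M = (k+M)+1)).trans (finSuccEquiv (k+M))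

lemma dEquiv_castAdd_zero (k M : ℕ) : dEquiv k M (Fin.castAdd M (0 : Fin (k+1))) = none := by
  have h : (finCongr (by omega : k+1+M = (k+M)+1)) (Fin.castAdd M (0 : Fin (k+1)))
      = 0 := by ext; simp
  rw [dEquiv, Equiv.trans_apply, h, finSuccEquiv_zero]

lemma dEquiv_castAdd_succ (k M : ℕ) (a : Fin k) :
    dEquiv k M (Fin.castAdd M a.succ) = some (Fin.castAdd M a) := by
  have h : (finCongr (by omega : k+1+M = (k+M)+1)) (Fin.castAdd M a.succ)
      = (Fin.castAdd M a).succ := by ext; simp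
  rw [dEquiv, Equiv.trans_apply, h, finSuccEquiv_succ]

lemma dEquiv_natAdd (k M : ℕ) (b : Fin M) :
    dEquiv k M (Fin.natAdd (k+1) b) = some (Fin.natAdd k b) := by
  have h : (finCongr (by omega : k+1+M = (k+M)+1)) (Fin.natAdd (k+1) b)
      = (Fin.natAdd k b).succ := by ext; simp; omega
  rw [dEquiv, Equiv.trans_apply, h, finSuccEquiv_succ]

lemma extend_transport (M k : ℕ) (Γ : Matrix (Fin M → Fin N) (Fin M → Fin N) ℂ) :
    (extendOp N M (k+1) Γ).submatrix (fe N (dEquiv k M)) (fe N (dEquiv k M))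
      = E1 N (extendOp N M k Γ) := by
  ext i j
  simp only [Matrix.submatrix_apply, extendOp, E1, of_apply, fe_apply]
  have hΓi : (fun b : Fin M => i (dEquiv k M (Fin.natAdd (k+1) b)))
      = fun b : Fin M => (i ∘ some) (Fin.natAdd k b) := by
    funext b; rw [dEquiv_natAdd]; rfl
  have hΓj : (fun b : Fin M => j (dEquiv k M (Fin.natAdd (k+1) b)))
      = fun b : Fin M => (j ∘ some) (Fin.natAdd k b) := by
    funext b; rw [dEquiv_natAdd]; rfl
  rw [hΓi, hΓj]
  have hcond : ((fun a : Fin (k+1) => i (dEquiv k M (Fin.castAdd M a)))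
        = fun a : Fin (k+1) => j (dEquiv k M (Fin.castAdd M a)))
      ↔ (i none = j none ∧
        ((fun a : Fin k => (i ∘ some) (Fin.castAdd M a))
          = fun a : Fin k => (j ∘ some) (Fin.castAdd M a))) := by
    rw [funext_iff, Fin.forall_fin_succ]
    simp only [dEquiv_castAdd_zero, dEquiv_castAdd_succ, Function.comp_apply]
    constructor
    · rintro ⟨h0, hs⟩
      exact ⟨h0, funext hs⟩
    · rintro ⟨h0, hs⟩
      exact ⟨h0, fun a => congrFun hs a⟩
  simp only [hcond]
  by_cases hP : i none = j none <;>
    by_cases hQ : ((fun a : Fin k => (i ∘ some) (Fin.castAdd M a))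
      = fun a : Fin k => (j ∘ some) (Fin.castAdd M a)) <;>
    simp [hP, hQ]

lemma symProj_eq (m : ℕ) : symProj m N = gProj N (Fin m) := by
  rw [symProj, gProj, Fintype.card_fin]
  rfl

lemma trace_base (M : ℕ) (Γ : Matrix (Fin M → Fin N) (Fin M → Fin N) ℂ)
    (hΓ₁ : symProj M N * Γ = Γ) :
    (gProj N (Fin (0+M)) * extendOp N M 0 Γ).trace = Γ.trace := by
  have hd : (0 : ℕ) + M = M := by omega
  set d : Fin (0+M) ≃ Fin M := finCongr hd with hdd
  have e2 : (extendOp N M 0 Γ).submatrix (fe N d) (fe N d) = Γ := by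
    ext i j
    simp only [Matrix.submatrix_apply, extendOp, of_apply, fe_apply]
    simp only [show ((fun a : Fin 0 => i (d (Fin.castAdd M a))) = fun a => j (d (Fin.castAdd M a)))
      from funext fun a => a.elim0, ↓reduceIte, one_mul]
    have h1 : (fun b : Fin M => i (d (Fin.natAdd 0 b))) = i := by
      funext b
      congr 1
      ext
      simp [hdd]
    have h2 : (fun b : Fin M => j (d (Fin.natAdd 0 b))) = j := by
      funext b
      congr 1
      ext
      simp [hdd]
    rw [h1, h2]
  have e1 := gProj_submatrix (N := N) d
  calc (gProj N (Fin (0+M)) * extendOp N M 0 Γ).trace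
      = ((gProj N (Fin (0+M)) * extendOp N M 0 Γ).submatrix (fe N d) (fe N d)).trace :=
        (trace_submatrix_fe d _).symm
    _ = ((gProj N (Fin (0+M))).submatrix (fe N d) (fe N d)
          * (extendOp N M 0 Γ).submatrix (fe N d) (fe N d)).trace := by
        rw [Matrix.submatrix_mul_equiv]
    _ = (gProj N (Fin M) * Γ).trace := by rw [e1, e2]
    _ = Γ.trace := by rw [← symProj_eq, hΓ₁]

lemma trace_step (M k : ℕ) (Γ : Matrix (Fin M → Fin N) (Fin M → Fin N) ℂ) :
    (gProj N (Fin (k+1+M)) * extendOp N M (k+1) Γ).trace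
      = ((N : ℂ) + ((k+M : ℕ) : ℂ)) / (((k+M : ℕ) : ℂ) + 1)
        * (gProj N (Fin (k+M)) * extendOp N M k Γ).trace := by
  have e1 := gProj_submatrix (N := N) (dEquiv k M)
  have e2 := extend_transport (N := N) M k Γ
  have t1 : (gProj N (Fin (k+1+M)) * extendOp N M (k+1) Γ).trace
      = (gProj N (Option (Fin (k+M))) * E1 N (extendOp N M k Γ)).trace := by
    rw [← e1, ← e2, Matrix.submatrix_mul_equiv, trace_submatrix_fe]
  rw [t1, ← gProj_mul_E1_gProj,
    lemA _ (by rw [← Matrix.mul_assoc, gProj_mul_gProj]), Fintype.card_fin]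

lemma main_aux (M : ℕ) (hN : 1 ≤ N) (Γ : Matrix (Fin M → Fin N) (Fin M → Fin N) ℂ)
    (hΓ₁ : symProj M N * Γ = Γ) :
    ∀ k : ℕ, (gProj N (Fin (k+M)) * extendOp N M k Γ).trace
      = (((M+N-1+k).factorial : ℂ) * (M.factorial : ℂ))
        / (((M+N-1).factorial : ℂ) * ((M+k).factorial : ℂ)) * Γ.trace
  | 0 => by
    rw [trace_base M Γ hΓ₁]
    rw [show M+N-1+0 = M+N-1 from rfl, show M+0 = M from rfl]
    rw [div_self (mul_ne_zero (by exact_mod_cast Nat.factorial_ne_zero _)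
      (by exact_mod_cast Nat.factorial_ne_zero _)), one_mul]
  | (k+1) => by
    rw [trace_step M k Γ, main_aux M hN Γ hΓ₁ k]
    have h1 : ((M+N-1).factorial : ℂ) ≠ 0 := by exact_mod_cast Nat.factorial_ne_zero _
    have h2 : ((M+k).factorial : ℂ) ≠ 0 := by exact_mod_cast Nat.factorial_ne_zero _
    have hkM : (((k+M : ℕ)) : ℂ) + 1 ≠ 0 := by
      exact_mod_cast Nat.succ_ne_zero (k+M)
    have e3 : (((M+N-1+k)+1 : ℕ) : ℂ) = (N : ℂ) + ((k+M : ℕ) : ℂ) := by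
      have : (M+N-1+k)+1 = N + (k+M) := by omega
      exact_mod_cast congrArg (Nat.cast : ℕ → ℂ) this
    rw [show M+N-1+(k+1) = (M+N-1+k)+1 from rfl, Nat.factorial_succ,
      show M+(k+1) = (M+k)+1 from rfl, Nat.factorial_succ]
    push_cast [e3]
    have e4 : ((M : ℂ) + (k : ℂ) + 1) = ((k+M : ℕ) : ℂ) + 1 := by push_cast; ring
    rw [e4]
    field_simp
    rw [show ((k+M : ℕ) : ℂ) + 1 = (k:ℂ) + M + 1 by push_cast; ring, mul_div_assoc,
      div_self (by exact_mod_cast Nat.succ_ne_zero (k+M)), mul_one]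

end CloneAux

open CloneAux in
/-- `Tr_{H_{M+k}} T^k(Γ) = [(M+k+N-1)!/(M+N-1)!] ⋅ Tr_{H_M} Γ` for any
operator `Γ` on the symmetric subspace `H_M` (extended by zero, i.e. `P_M Γ = Γ = Γ P_M`). -/
theorem trace_Tk (N M k : ℕ) (hN : 1 ≤ N)
    (Γ : Matrix (Fin M → Fin N) (Fin M → Fin N) ℂ)
    (hΓ₁ : symProj M N * Γ = Γ) (hΓ₂ : Γ * symProj M N = Γ) :
    (Tk N M k Γ).trace =
      (((M + k + N - 1).factorial : ℂ) / ((M + N - 1).factorial : ℂ)) * Γ.trace := by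
  rw [Tk, Matrix.trace_smul, smul_eq_mul]
  rw [Matrix.trace_mul_comm (symProj (k+M) N * extendOp N M k Γ) (symProj (k+M) N)]
  rw [← Matrix.mul_assoc]
  rw [show symProj (k+M) N * symProj (k+M) N = symProj (k+M) N from by
    rw [symProj_eq]; exact gProj_mul_gProj]
  rw [symProj_eq, main_aux M hN Γ hΓ₁ k]
  have h1 : ((M+N-1).factorial : ℂ) ≠ 0 := by exact_mod_cast Nat.factorial_ne_zero _
  have h2 : ((M+k).factorial : ℂ) ≠ 0 := by exact_mod_cast Nat.factorial_ne_zero _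
  have h3 : ((M).factorial : ℂ) ≠ 0 := by exact_mod_cast Nat.factorial_ne_zero _
  rw [show M+k+N-1 = M+N-1+k from by omega]
  field_simp
end
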